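/- Let P₁, P₂ be two von Mises–Fisher distributions on the unit sphere S^{n−1} ⊂ R^n with parameters θ₁ = (μ₁, κ₁) and θ₂ = (μ₂, κ₂), where μᵢ ∈ S^{n−1} and κᵢ > 0, i.e., with densities proportional to exp(κᵢ μᵢᵀ u). Then the KL divergence satisfies D_KL(P₁, P₂) ≤ 2‖κ₁μ₁ − κ₂μ₂‖₂. -/

import Mathlib

open MeasureTheory Metric

noncomputable section

/-- The surface measure on the unit sphere `S^{n-1} ⊂ ℝⁿ`. -/
def sphereMeasure (n : ℕ) : Measure (sphere (0 : EuclideanSpace ℝ (Fin n)) 1) :=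
  (volume : Measure (EuclideanSpace ℝ (Fin n))).toSphere

/-- The von Mises–Fisher density on the unit sphere with parameter `(μ, κ)`,
proportional to `exp(κ ⟪μ, u⟫)` and normalized with respect to the surface measure. -/
def vMFDensity (n : ℕ) (μ : EuclideanSpace ℝ (Fin n)) (κ : ℝ)
    (u : sphere (0 : EuclideanSpace ℝ (Fin n)) 1) : ℝ :=
  Real.exp (κ * inner ℝ μ (u : EuclideanSpace ℝ (Fin n))) /
    ∫ v, Real.exp (κ * inner ℝ μ (v : EuclideanSpace ℝ (Fin n))) ∂(sphereMeasure n)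

namespace KLvMFAux

variable {n : ℕ}

lemma cont_inner (μ : EuclideanSpace ℝ (Fin n)) :
    Continuous fun u : sphere (0 : EuclideanSpace ℝ (Fin n)) 1 =>
      (inner ℝ μ (u : EuclideanSpace ℝ (Fin n)) : ℝ) :=
  Continuous.inner continuous_const continuous_subtype_val

lemma cont_exp (μ : EuclideanSpace ℝ (Fin n)) (κ : ℝ) :
    Continuous fun u : sphere (0 : EuclideanSpace ℝ (Fin n)) 1 =>
      Real.exp (κ * inner ℝ μ (u : EuclideanSpace ℝ (Fin n))) :=
  Real.continuous_exp.comp (continuous_const.mul (cont_inner μ))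

instance instFinite (n : ℕ) : IsFiniteMeasure (sphereMeasure n) := by
  unfold sphereMeasure; infer_instance

lemma integrable_cont {f : sphere (0 : EuclideanSpace ℝ (Fin n)) 1 → ℝ}
    (hf : Continuous f) : Integrable f (sphereMeasure n) :=
  hf.integrable_of_hasCompactSupport (HasCompactSupport.of_compactSpace f)

lemma norm_coe (u : sphere (0 : EuclideanSpace ℝ (Fin n)) 1) :
    ‖(u : EuclideanSpace ℝ (Fin n))‖ = 1 :=
  mem_sphere_zero_iff_norm.mp u.2

lemma inner_le (μ : EuclideanSpace ℝ (Fin n)) (u : sphere (0 : EuclideanSpace ℝ (Fin n)) 1) :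
    |(inner ℝ μ (u : EuclideanSpace ℝ (Fin n)) : ℝ)| ≤ ‖μ‖ := by
  calc |(inner ℝ μ (u : EuclideanSpace ℝ (Fin n)) : ℝ)|
      ≤ ‖μ‖ * ‖(u : EuclideanSpace ℝ (Fin n))‖ := abs_real_inner_le_norm _ _
    _ = ‖μ‖ := by rw [norm_coe, mul_one]

lemma measure_univ_pos (m : ℕ) :
    0 < ((sphereMeasure (m + 1)) Set.univ).toReal := by
  refine ENNReal.toReal_pos ?_ (measure_ne_top _ _)
  rw [sphereMeasure, Measure.toSphere_apply_univ]
  refine mul_ne_zero ?_ (measure_ball_pos _ _ one_pos).ne'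
  simp [finrank_euclideanSpace]

lemma Z_pos (m : ℕ) (μ : EuclideanSpace ℝ (Fin (m + 1))) (κ : ℝ) (hμ : ‖μ‖ = 1) :
    0 < ∫ v, Real.exp (κ * inner ℝ μ (v : EuclideanSpace ℝ (Fin (m + 1)))) ∂(sphereMeasure (m + 1)) := by
  have hle : ∀ v : sphere (0 : EuclideanSpace ℝ (Fin (m + 1))) 1,
      Real.exp (-|κ|) ≤ Real.exp (κ * inner ℝ μ (v : EuclideanSpace ℝ (Fin (m + 1)))) := by
    intro v
    refine Real.exp_le_exp.2 ?_
    have h1 : |(κ * inner ℝ μ (v : EuclideanSpace ℝ (Fin (m + 1))) : ℝ)| ≤ |κ| := by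
      rw [abs_mul]
      calc |κ| * |(inner ℝ μ (v : EuclideanSpace ℝ (Fin (m + 1))) : ℝ)|
          ≤ |κ| * 1 := by
            refine mul_le_mul_of_nonneg_left ?_ (abs_nonneg κ)
            simpa [hμ] using inner_le μ v
        _ = |κ| := mul_one _
    linarith [neg_abs_le (κ * inner ℝ μ (v : EuclideanSpace ℝ (Fin (m + 1))) : ℝ), h1]
  have hint : Integrable (fun v : sphere (0 : EuclideanSpace ℝ (Fin (m + 1))) 1 =>
      Real.exp (κ * inner ℝ μ (v : EuclideanSpace ℝ (Fin (m + 1))))) (sphereMeasure (m + 1)) :=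
    integrable_cont (cont_exp μ κ)
  have hmono := integral_mono (integrable_const (Real.exp (-|κ|))) hint hle
  rw [integral_const] at hmono
  calc (0 : ℝ) < ((sphereMeasure (m + 1)) Set.univ).toReal • Real.exp (-|κ|) := by
        have := measure_univ_pos m
        have := Real.exp_pos (-|κ|)
        positivity
    _ ≤ _ := hmono

end KLvMFAux

open KLvMFAux in
/-- The KL divergence between two von Mises–Fisher distributions with parameters
`(μ₁, κ₁)` and `(μ₂, κ₂)` is at most `2‖κ₁μ₁ − κ₂μ₂‖₂`. -/
theorem kl_vMF_le (n : ℕ) (μ₁ μ₂ : EuclideanSpace ℝ (Fin n)) (κ₁ κ₂ : ℝ)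
    (hμ₁ : ‖μ₁‖ = 1) (hμ₂ : ‖μ₂‖ = 1) (hκ₁ : 0 < κ₁) (hκ₂ : 0 < κ₂) :
    ∫ u, vMFDensity n μ₁ κ₁ u *
        Real.log (vMFDensity n μ₁ κ₁ u / vMFDensity n μ₂ κ₂ u) ∂(sphereMeasure n) ≤
      2 * ‖κ₁ • μ₁ - κ₂ • μ₂‖ := by
  rcases n with _ | m
  · exfalso
    have h0 : μ₁ = 0 := Subsingleton.elim μ₁ 0
    rw [h0, norm_zero] at hμ₁
    norm_num at hμ₁
  set d : EuclideanSpace ℝ (Fin (m + 1)) := κ₁ • μ₁ - κ₂ • μ₂ with hd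
  set Z₁ : ℝ := ∫ v, Real.exp (κ₁ * inner ℝ μ₁ (v : EuclideanSpace ℝ (Fin (m + 1))))
      ∂(sphereMeasure (m + 1)) with hZ₁
  set Z₂ : ℝ := ∫ v, Real.exp (κ₂ * inner ℝ μ₂ (v : EuclideanSpace ℝ (Fin (m + 1))))
      ∂(sphereMeasure (m + 1)) with hZ₂
  have hZ₁pos : 0 < Z₁ := Z_pos m μ₁ κ₁ hμ₁
  have hZ₂pos : 0 < Z₂ := Z_pos m μ₂ κ₂ hμ₂
  have hinner : ∀ u : sphere (0 : EuclideanSpace ℝ (Fin (m + 1))) 1,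
      (inner ℝ d (u : EuclideanSpace ℝ (Fin (m + 1))) : ℝ) =
      κ₁ * inner ℝ μ₁ (u : EuclideanSpace ℝ (Fin (m + 1))) -
        κ₂ * inner ℝ μ₂ (u : EuclideanSpace ℝ (Fin (m + 1))) := by
    intro u
    rw [hd, inner_sub_left, real_inner_smul_left, real_inner_smul_left]
  have hinner_le : ∀ u : sphere (0 : EuclideanSpace ℝ (Fin (m + 1))) 1,
      (inner ℝ d (u : EuclideanSpace ℝ (Fin (m + 1))) : ℝ) ≤ ‖d‖ := fun u =>
    (le_abs_self _).trans (inner_le d u)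
  have hinner_ge : ∀ u : sphere (0 : EuclideanSpace ℝ (Fin (m + 1))) 1,
      -‖d‖ ≤ (inner ℝ d (u : EuclideanSpace ℝ (Fin (m + 1))) : ℝ) := fun u => by
    have := (abs_le.mp (inner_le d u)).1; linarith
  have hZle : Z₂ ≤ Real.exp ‖d‖ * Z₁ := by
    have hle : ∀ v : sphere (0 : EuclideanSpace ℝ (Fin (m + 1))) 1,
        Real.exp (κ₂ * inner ℝ μ₂ (v : EuclideanSpace ℝ (Fin (m + 1)))) ≤
        Real.exp ‖d‖ * Real.exp (κ₁ * inner ℝ μ₁ (v : EuclideanSpace ℝ (Fin (m + 1)))) := by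
      intro v
      rw [← Real.exp_add]
      refine Real.exp_le_exp.2 ?_
      have h1 := hinner_ge v
      have h2 := hinner v
      linarith
    have h2 : Integrable (fun v : sphere (0 : EuclideanSpace ℝ (Fin (m + 1))) 1 =>
        Real.exp ‖d‖ * Real.exp (κ₁ * inner ℝ μ₁ (v : EuclideanSpace ℝ (Fin (m + 1)))))
        (sphereMeasure (m + 1)) :=
      (integrable_cont (cont_exp μ₁ κ₁)).const_mul _
    have h3 := integral_mono (integrable_cont (cont_exp μ₂ κ₂)) h2 hle
    rwa [integral_const_mul] at h3
  have hlog : Real.log Z₂ - Real.log Z₁ ≤ ‖d‖ := by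
    have h1 : Real.log Z₂ ≤ Real.log (Real.exp ‖d‖ * Z₁) :=
      Real.log_le_log hZ₂pos hZle
    rw [Real.log_mul (Real.exp_pos _).ne' hZ₁pos.ne', Real.log_exp] at h1
    linarith
  have hrw : (fun u : sphere (0 : EuclideanSpace ℝ (Fin (m + 1))) 1 =>
        vMFDensity (m + 1) μ₁ κ₁ u *
        Real.log (vMFDensity (m + 1) μ₁ κ₁ u / vMFDensity (m + 1) μ₂ κ₂ u)) =
      fun u : sphere (0 : EuclideanSpace ℝ (Fin (m + 1))) 1 => vMFDensity (m + 1) μ₁ κ₁ u *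
        ((inner ℝ d (u : EuclideanSpace ℝ (Fin (m + 1))) : ℝ) +
          (Real.log Z₂ - Real.log Z₁)) := by
    funext u
    congr 1
    rw [vMFDensity, vMFDensity, ← hZ₁, ← hZ₂,
      Real.log_div (div_pos (Real.exp_pos _) hZ₁pos).ne' (div_pos (Real.exp_pos _) hZ₂pos).ne',
      Real.log_div (Real.exp_pos _).ne' hZ₁pos.ne',
      Real.log_div (Real.exp_pos _).ne' hZ₂pos.ne',
      Real.log_exp, Real.log_exp, hinner u]
    ring
  rw [hrw]
  have hf₁nonneg : ∀ u : sphere (0 : EuclideanSpace ℝ (Fin (m + 1))) 1,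
      0 ≤ vMFDensity (m + 1) μ₁ κ₁ u := fun u => by
    rw [vMFDensity, ← hZ₁]
    positivity
  have hptwise : ∀ u : sphere (0 : EuclideanSpace ℝ (Fin (m + 1))) 1,
      vMFDensity (m + 1) μ₁ κ₁ u *
      ((inner ℝ d (u : EuclideanSpace ℝ (Fin (m + 1))) : ℝ) + (Real.log Z₂ - Real.log Z₁)) ≤
      vMFDensity (m + 1) μ₁ κ₁ u * (2 * ‖d‖) := by
    intro u
    refine mul_le_mul_of_nonneg_left ?_ (hf₁nonneg u)
    have := hinner_le u
    linarith
  have hcontf₁ : Continuous fun u : sphere (0 : EuclideanSpace ℝ (Fin (m + 1))) 1 =>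
      vMFDensity (m + 1) μ₁ κ₁ u := by
    simp only [vMFDensity, ← hZ₁]
    exact (cont_exp μ₁ κ₁).div_const _
  have hint1 : Integrable (fun u : sphere (0 : EuclideanSpace ℝ (Fin (m + 1))) 1 =>
      vMFDensity (m + 1) μ₁ κ₁ u *
      ((inner ℝ d (u : EuclideanSpace ℝ (Fin (m + 1))) : ℝ) + (Real.log Z₂ - Real.log Z₁)))
      (sphereMeasure (m + 1)) :=
    integrable_cont (hcontf₁.mul ((cont_inner d).add continuous_const))
  have hint2 : Integrable (fun u : sphere (0 : EuclideanSpace ℝ (Fin (m + 1))) 1 =>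
      vMFDensity (m + 1) μ₁ κ₁ u * (2 * ‖d‖)) (sphereMeasure (m + 1)) :=
    (integrable_cont hcontf₁).mul_const _
  have hmono := integral_mono hint1 hint2 hptwise
  have hone : ∫ u, vMFDensity (m + 1) μ₁ κ₁ u ∂(sphereMeasure (m + 1)) = 1 := by
    simp only [vMFDensity, ← hZ₁]
    rw [integral_div, ← hZ₁, div_self hZ₁pos.ne']
  calc ∫ u, vMFDensity (m + 1) μ₁ κ₁ u *
        ((inner ℝ d (u : EuclideanSpace ℝ (Fin (m + 1))) : ℝ) +
          (Real.log Z₂ - Real.log Z₁)) ∂(sphereMeasure (m + 1))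
      ≤ ∫ u, vMFDensity (m + 1) μ₁ κ₁ u * (2 * ‖d‖) ∂(sphereMeasure (m + 1)) := hmono
    _ = (∫ u, vMFDensity (m + 1) μ₁ κ₁ u ∂(sphereMeasure (m + 1))) * (2 * ‖d‖) :=
        integral_mul_const _ _
    _ = 2 * ‖d‖ := by rw [hone, one_mul]

end
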